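/- Let C be any set of probability measures on X^∞ with c_n(C) := Σ_{x_{1..n}} sup_{μ∈C} μ(x_{1..n}) finite for each n, and suppose log c_n(C) = o(n). Then the mixture predictor ρ_c := Σ_k w_k μ^(k) — where μ^(k) agrees with the normalized maximum-likelihood measure λ_C on X^k and outputs a fixed symbol afterwards, and w_k = (6/π²)/k² — satisfies (1/n)L_n(μ,ρ_c) ≤ (1/n)(log c_n(C) + 2 log n + log(π²/6)) → 0 for every μ ∈ C. -/

import Mathlib

open Real Filter
open scoped Topology

noncomputable section

def IsProcess {X : Type} [Fintype X] (μ : (n : ℕ) → (Fin n → X) → ℝ) : Prop :=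
  (∀ n w, 0 ≤ μ n w) ∧ (∀ n, ∑ w : Fin n → X, μ n w = 1) ∧
  (∀ n (w : Fin n → X), μ n w = ∑ a : X, μ (n + 1) (Fin.snoc w a))

/-- Cumulative KL loss `L_n(μ,ρ)`. -/
def KL {X : Type} [Fintype X] (μ ρ : (n : ℕ) → (Fin n → X) → ℝ) (n : ℕ) : ℝ :=
  ∑ w : Fin n → X, μ n w * Real.log (μ n w / ρ n w)

/-- Maximum-likelihood coefficient of a word: `c_{x_{1..n}}(C) = sup_{μ∈C} μ(x_{1..n})`. -/
def cWord {X : Type} [Fintype X] (C : Set ((n : ℕ) → (Fin n → X) → ℝ)) (n : ℕ)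
    (w : Fin n → X) : ℝ :=
  sSup ((fun μ => μ n w) '' C)

/-- The normalizer `c_n(C) = Σ_{x_{1..n}} c_{x_{1..n}}(C)`. -/
def cN {X : Type} [Fintype X] (C : Set ((n : ℕ) → (Fin n → X) → ℝ)) (n : ℕ) : ℝ :=
  ∑ w : Fin n → X, cWord C n w

/-- The normalized maximum likelihood (NML) estimator `λ_C`. -/
def nml {X : Type} [Fintype X] (C : Set ((n : ℕ) → (Fin n → X) → ℝ)) (n : ℕ)
    (w : Fin n → X) : ℝ :=
  cWord C n w / cN C n

/-- Extension of a word of length `n` by a word of length `k − n` (for `n ≤ k`). -/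
def extendW {X : Type} {n k : ℕ} (h : n ≤ k) (w : Fin n → X) (v : Fin (k - n) → X) :
    Fin k → X :=
  fun i => if hi : (i : ℕ) < n then w ⟨i, hi⟩
    else v ⟨(i : ℕ) - n, by have := i.isLt; omega⟩

open scoped Classical in
/-- The measure `μ^{(k)}` that agrees with the NML estimator `λ_C` on words of length `k`
and outputs the fixed symbol `a₀` deterministically afterwards (for shorter words, its
probabilities are the corresponding marginals). -/
def nmlK {X : Type} [Fintype X] (C : Set ((n : ℕ) → (Fin n → X) → ℝ)) (a₀ : X)
    (k n : ℕ) (w : Fin n → X) : ℝ :=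
  if h : n ≤ k then ∑ v : Fin (k - n) → X, nml C k (extendW h w v)
  else
    nml C k (fun i : Fin k => w (Fin.castLE (le_of_not_ge h) i)) *
      (if ∀ i : Fin n, k ≤ (i : ℕ) → w i = a₀ then 1 else 0)

/-- The mixture predictor `ρ_c = Σ_{k≥1} w_k μ^{(k)}` with `w_k = (6/π²)/k²`. -/
def rhoC {X : Type} [Fintype X] (C : Set ((n : ℕ) → (Fin n → X) → ℝ)) (a₀ : X)
    (n : ℕ) (w : Fin n → X) : ℝ :=
  ∑' k : ℕ, ((6 / Real.pi ^ 2) / ((k : ℝ) + 1) ^ 2) * nmlK C a₀ (k + 1) n w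

-- ===== auxiliary lemmas =====

lemma sum_comp_le' {α β : Type*} [Fintype α] [Fintype β] (e : α → β)
    (he : Function.Injective e) (f : β → ℝ) (hf : ∀ b, 0 ≤ f b) :
    ∑ a, f (e a) ≤ ∑ b, f b := by
  classical
  calc ∑ a, f (e a) = ∑ b ∈ Finset.univ.image e, f b :=
        (Finset.sum_image (fun a _ b _ h => he h)).symm
    _ ≤ ∑ b, f b :=
        Finset.sum_le_sum_of_subset_of_nonneg (Finset.subset_univ _) (fun b _ _ => hf b)

section C
variable {X : Type} [Fintype X] {C : Set ((n : ℕ) → (Fin n → X) → ℝ)}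
variable (hC : ∀ μ ∈ C, IsProcess μ) (hCne : C.Nonempty)
include hC

lemma le_cWord' {μ} (hμ : μ ∈ C) (n : ℕ) (w : Fin n → X) : μ n w ≤ cWord C n w := by
  have hb : BddAbove ((fun μ => μ n w) '' C) := by
    refine ⟨1, ?_⟩
    rintro x ⟨ν, hν, rfl⟩
    obtain ⟨h0, h1, -⟩ := hC ν hν
    calc ν n w ≤ ∑ w', ν n w' :=
          Finset.single_le_sum (fun i _ => h0 n i) (Finset.mem_univ w)
      _ = 1 := h1 n
  exact le_csSup hb ⟨μ, hμ, rfl⟩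

include hCne

lemma cWord_nonneg' (n : ℕ) (w : Fin n → X) : 0 ≤ cWord C n w := by
  obtain ⟨μ, hμ⟩ := hCne
  exact le_trans ((hC μ hμ).1 n w) (le_cWord' hC hμ n w)

lemma cN_pos' (n : ℕ) : 0 < cN C n := by
  obtain ⟨μ, hμ⟩ := hCne
  have h1 : (1:ℝ) ≤ cN C n := by
    rw [← (hC μ hμ).2.1 n]
    exact Finset.sum_le_sum (fun w _ => le_cWord' hC hμ n w)
  linarith

lemma nml_nonneg' (n : ℕ) (w : Fin n → X) : 0 ≤ nml C n w :=
  div_nonneg (cWord_nonneg' hC hCne n w) (cN_pos' hC hCne n).le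

lemma sum_nml' (n : ℕ) : ∑ w : Fin n → X, nml C n w = 1 := by
  simp only [nml, ← Finset.sum_div]
  exact div_self (ne_of_gt (cN_pos' hC hCne n))

end C

section K
variable {X : Type} [Fintype X] {C : Set ((n : ℕ) → (Fin n → X) → ℝ)}
variable (hC : ∀ μ ∈ C, IsProcess μ) (hCne : C.Nonempty) (a₀ : X)

lemma extendW_inj' {n k : ℕ} (h : n ≤ k) :
    Function.Injective (fun p : (Fin n → X) × (Fin (k - n) → X) => extendW h p.1 p.2) := by
  rintro ⟨w, v⟩ ⟨w', v'⟩ he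
  simp only [Prod.mk.injEq]
  constructor
  · funext i
    have h2 := congrFun he ⟨i, lt_of_lt_of_le i.isLt h⟩
    simpa [extendW, i.isLt] using h2
  · funext j
    have hj : n + (j : ℕ) < k := by have := j.isLt; omega
    have h2 := congrFun he ⟨n + j, hj⟩
    simp only [extendW, dif_neg (show ¬ ((⟨n + j, hj⟩ : Fin k) : ℕ) < n by simp)] at h2
    have : ((⟨n + j, hj⟩ : Fin k) : ℕ) - n = (j : ℕ) := by simp
    convert h2 using 2 <;> exact (Fin.ext this.symm)

lemma nmlK_self (n : ℕ) (w : Fin n → X) : nmlK C a₀ n n w = nml C n w := by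
  classical
  rw [nmlK, dif_pos le_rfl]
  haveI : IsEmpty (Fin (n - n)) := by rw [Nat.sub_self]; infer_instance
  rw [Fintype.sum_unique]
  congr 1
  funext i
  rw [extendW, dif_pos i.isLt]

include hC hCne

lemma nmlK_nonneg (k n : ℕ) (w : Fin n → X) : 0 ≤ nmlK C a₀ k n w := by
  rw [nmlK]
  split_ifs with h
  · exact Finset.sum_nonneg fun v _ => nml_nonneg' hC hCne k _
  all_goals
    refine mul_nonneg (nml_nonneg' hC hCne k _) ?_ <;> norm_num

lemma sum_nmlK_le (k n : ℕ) : ∑ w : Fin n → X, nmlK C a₀ k n w ≤ 1 := by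
  classical
  by_cases h : n ≤ k
  · simp only [nmlK, dif_pos h]
    rw [← Fintype.sum_prod_type']
    calc ∑ p : (Fin n → X) × (Fin (k - n) → X), nml C k (extendW h p.1 p.2)
        ≤ ∑ u : Fin k → X, nml C k u :=
          sum_comp_le' _ (extendW_inj' h) _ (fun u => nml_nonneg' hC hCne k u)
      _ = 1 := sum_nml' hC hCne k
  · simp only [nmlK, dif_neg h, mul_ite, mul_one, mul_zero]
    rw [← Finset.sum_filter]
    set r : (Fin n → X) → (Fin k → X) := fun w i => w (Fin.castLE (le_of_not_ge h) i) with hr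
    have hinj : ∀ w ∈ Finset.univ.filter (fun w : Fin n → X => ∀ i : Fin n, k ≤ (i : ℕ) → w i = a₀),
        ∀ w' ∈ Finset.univ.filter (fun w : Fin n → X => ∀ i : Fin n, k ≤ (i : ℕ) → w i = a₀),
          r w = r w' → w = w' := by
      intro w hw w' hw' hrw
      rw [Finset.mem_filter] at hw hw'
      funext i
      by_cases hik : (i : ℕ) < k
      · have := congrFun hrw ⟨i, hik⟩; simpa [hr] using this
      · rw [hw.2 i (le_of_not_gt hik), hw'.2 i (le_of_not_gt hik)]
    calc ∑ w ∈ Finset.univ.filter _, nml C k (r w)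
        = ∑ u ∈ Finset.image r (Finset.univ.filter _), nml C k u := (Finset.sum_image hinj).symm
      _ ≤ ∑ u : Fin k → X, nml C k u :=
          Finset.sum_le_sum_of_subset_of_nonneg (Finset.subset_univ _)
            (fun u _ _ => nml_nonneg' hC hCne k u)
      _ = 1 := sum_nml' hC hCne k

lemma nmlK_le_one (k n : ℕ) (w : Fin n → X) : nmlK C a₀ k n w ≤ 1 :=
  le_trans (Finset.single_le_sum (fun i _ => nmlK_nonneg hC hCne a₀ k n i) (Finset.mem_univ w))
    (sum_nmlK_le hC hCne a₀ k n)

end K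

-- ===== weights =====

set_option maxHeartbeats 1000000 in
lemma W_summable : Summable (fun k : ℕ => (6 / Real.pi ^ 2) / ((k : ℝ) + 1) ^ 2) := by
  have h2 : Summable (fun k : ℕ => 1 / ((k : ℝ)) ^ 2) :=
    Real.summable_one_div_nat_pow.mpr (by norm_num)
  have h3 : Summable (fun k : ℕ => 1 / (((k + 1 : ℕ) : ℝ)) ^ 2) :=
    (summable_nat_add_iff 1).mpr h2
  have h4 : Summable (fun k : ℕ => 1 / ((k : ℝ) + 1) ^ 2) := by
    convert h3 using 2 with k; push_cast; ring
  exact (h4.mul_left (6 / Real.pi ^ 2)).congr (fun k => by rw [mul_one_div])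

lemma W_pos (k : ℕ) : 0 < (6 / Real.pi ^ 2) / ((k : ℝ) + 1) ^ 2 := by
  have := Real.pi_pos
  positivity

section R
variable {X : Type} [Fintype X] {C : Set ((n : ℕ) → (Fin n → X) → ℝ)}
variable (hC : ∀ μ ∈ C, IsProcess μ) (hCne : C.Nonempty) (a₀ : X)
include hC hCne

lemma rho_summand (n : ℕ) (w : Fin n → X) :
    Summable (fun k : ℕ => (6 / Real.pi ^ 2) / ((k : ℝ) + 1) ^ 2 * nmlK C a₀ (k + 1) n w) := by
  refine Summable.of_nonneg_of_le
    (fun k => mul_nonneg (W_pos k).le (nmlK_nonneg hC hCne a₀ (k + 1) n w))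
    (fun k => ?_) W_summable
  calc (6 / Real.pi ^ 2) / ((k : ℝ) + 1) ^ 2 * nmlK C a₀ (k + 1) n w
      ≤ (6 / Real.pi ^ 2) / ((k : ℝ) + 1) ^ 2 * 1 :=
        mul_le_mul_of_nonneg_left (nmlK_le_one hC hCne a₀ (k + 1) n w) (W_pos k).le
    _ = _ := mul_one _

lemma rho_nonneg (n : ℕ) (w : Fin n → X) : 0 ≤ rhoC C a₀ n w :=
  tsum_nonneg fun k => mul_nonneg (W_pos k).le (nmlK_nonneg hC hCne a₀ (k + 1) n w)

lemma rho_ge (m : ℕ) (w : Fin (m + 1) → X) :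
    (6 / Real.pi ^ 2) / ((m : ℝ) + 1) ^ 2 * nml C (m + 1) w ≤ rhoC C a₀ (m + 1) w := by
  have h := Summable.le_tsum (rho_summand hC hCne a₀ (m + 1) w) m
    (fun j _ => mul_nonneg (W_pos j).le (nmlK_nonneg hC hCne a₀ (j + 1) (m + 1) w))
  rw [nmlK_self] at h
  exact h

lemma sum_rho_le (n : ℕ) :
    ∑ w : Fin n → X, rhoC C a₀ n w ≤ ∑' k : ℕ, (6 / Real.pi ^ 2) / ((k : ℝ) + 1) ^ 2 := by
  have hswap : ∑ w : Fin n → X, rhoC C a₀ n w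
      = ∑' k : ℕ, ∑ w : Fin n → X,
          (6 / Real.pi ^ 2) / ((k : ℝ) + 1) ^ 2 * nmlK C a₀ (k + 1) n w :=
    (Summable.tsum_finsetSum (fun w _ => rho_summand hC hCne a₀ n w)).symm
  rw [hswap]
  refine Summable.tsum_le_tsum (fun k => ?_) ?_ W_summable
  · rw [← Finset.mul_sum]
    calc (6 / Real.pi ^ 2) / ((k : ℝ) + 1) ^ 2 * ∑ w : Fin n → X, nmlK C a₀ (k + 1) n w
        ≤ (6 / Real.pi ^ 2) / ((k : ℝ) + 1) ^ 2 * 1 :=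
          mul_le_mul_of_nonneg_left (sum_nmlK_le hC hCne a₀ (k + 1) n) (W_pos k).le
      _ = _ := mul_one _
  · exact summable_sum (fun w _ => rho_summand hC hCne a₀ n w)

end R


/-- If `log c_n(C) = o(n)`, then the NML-based mixture predictor `ρ_c` satisfies
`(1/n) L_n(μ,ρ_c) ≤ (1/n)(log c_n(C) + 2 log n + log(π²/6)) → 0` for every `μ ∈ C`. -/
theorem nml_mixture_predicts
    {X : Type} [Fintype X] (C : Set ((n : ℕ) → (Fin n → X) → ℝ))
    (hC : ∀ μ ∈ C, IsProcess μ) (hCne : C.Nonempty) (a₀ : X)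
    (hsub : Tendsto (fun n : ℕ => Real.log (cN C n) / n) atTop (𝓝 0)) :
    ∀ μ ∈ C,
      (∀ n : ℕ, 1 ≤ n →
        (1 / (n : ℝ)) * KL μ (rhoC C a₀) n ≤
          (1 / (n : ℝ)) *
            (Real.log (cN C n) + 2 * Real.log n + Real.log (Real.pi ^ 2 / 6))) ∧
      Tendsto (fun n : ℕ => (1 / (n : ℝ)) * KL μ (rhoC C a₀) n) atTop (𝓝 0) := by
  intro μ hμ
  obtain ⟨h0, h1, -⟩ := hC μ hμ
  have hπ := Real.pi_pos
  set S₀ : ℝ := ∑' k : ℕ, (6 / Real.pi ^ 2) / ((k : ℝ) + 1) ^ 2 with hS₀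
  -- upper bound on KL
  have key : ∀ n : ℕ, 1 ≤ n → KL μ (rhoC C a₀) n ≤
      Real.log (cN C n) + 2 * Real.log n + Real.log (Real.pi ^ 2 / 6) := by
    intro n hn
    obtain ⟨m, rfl⟩ : ∃ m, n = m + 1 := ⟨n - 1, by omega⟩
    have hcN := cN_pos' hC hCne (m + 1)
    have hcast : (((m + 1 : ℕ) : ℝ)) = (m : ℝ) + 1 := by push_cast; ring
    set B := Real.log (cN C (m + 1)) + 2 * Real.log ((m + 1 : ℕ) : ℝ) +
      Real.log (Real.pi ^ 2 / 6) with hB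
    have hterm : ∀ w : Fin (m + 1) → X,
        μ (m + 1) w * Real.log (μ (m + 1) w / rhoC C a₀ (m + 1) w) ≤ μ (m + 1) w * B := by
      intro w
      rcases eq_or_lt_of_le (h0 (m + 1) w) with h | h
      · simp [← h]
      · set t : ℝ := (6 / Real.pi ^ 2) / ((m : ℝ) + 1) ^ 2 / cN C (m + 1) with ht
        have htpos : 0 < t := by positivity
        have h5 : μ (m + 1) w / cN C (m + 1) ≤ nml C (m + 1) w :=
          div_le_div_of_nonneg_right (le_cWord' hC hμ (m + 1) w) hcN.le
        have hρ1 : t * μ (m + 1) w ≤ rhoC C a₀ (m + 1) w := by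
          calc t * μ (m + 1) w
              = (6 / Real.pi ^ 2) / ((m : ℝ) + 1) ^ 2 * (μ (m + 1) w / cN C (m + 1)) := by
                rw [ht]; ring
            _ ≤ (6 / Real.pi ^ 2) / ((m : ℝ) + 1) ^ 2 * nml C (m + 1) w :=
                mul_le_mul_of_nonneg_left h5 (W_pos m).le
            _ ≤ rhoC C a₀ (m + 1) w := rho_ge hC hCne a₀ m w
        have hρpos : 0 < rhoC C a₀ (m + 1) w := lt_of_lt_of_le (mul_pos htpos h) hρ1
        have hlog : Real.log (μ (m + 1) w / rhoC C a₀ (m + 1) w) ≤ B := by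
          have hle : μ (m + 1) w / rhoC C a₀ (m + 1) w ≤ 1 / t := by
            rw [div_le_div_iff₀ hρpos htpos]
            nlinarith [hρ1]
          have h1t : 1 / t = cN C (m + 1) * ((m : ℝ) + 1) ^ 2 * (Real.pi ^ 2 / 6) := by
            rw [ht]; field_simp
          calc Real.log (μ (m + 1) w / rhoC C a₀ (m + 1) w) ≤ Real.log (1 / t) :=
                Real.log_le_log (div_pos h hρpos) hle
            _ = B := by
                rw [h1t, Real.log_mul (by positivity) (by positivity),
                  Real.log_mul hcN.ne' (by positivity), Real.log_pow, hB, hcast]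
                push_cast; ring
        exact mul_le_mul_of_nonneg_left hlog h.le
    calc KL μ (rhoC C a₀) (m + 1)
        = ∑ w : Fin (m + 1) → X, μ (m + 1) w * Real.log (μ (m + 1) w / rhoC C a₀ (m + 1) w) :=
          rfl
      _ ≤ ∑ w : Fin (m + 1) → X, μ (m + 1) w * B := Finset.sum_le_sum (fun w _ => hterm w)
      _ = B := by rw [← Finset.sum_mul, h1 (m + 1), one_mul]
  -- lower bound on KL
  have hlow : ∀ n : ℕ, 1 ≤ n → 1 - S₀ ≤ KL μ (rhoC C a₀) n := by
    intro n hn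
    obtain ⟨m, rfl⟩ : ∃ m, n = m + 1 := ⟨n - 1, by omega⟩
    have hcN := cN_pos' hC hCne (m + 1)
    have hterm : ∀ w : Fin (m + 1) → X,
        μ (m + 1) w - rhoC C a₀ (m + 1) w ≤
          μ (m + 1) w * Real.log (μ (m + 1) w / rhoC C a₀ (m + 1) w) := by
      intro w
      rcases eq_or_lt_of_le (h0 (m + 1) w) with h | h
      · simp only [← h, zero_sub, zero_mul]
        linarith [rho_nonneg hC hCne a₀ (m + 1) w]
      · set t : ℝ := (6 / Real.pi ^ 2) / ((m : ℝ) + 1) ^ 2 / cN C (m + 1) with ht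
        have htpos : 0 < t := by positivity
        have h5 : μ (m + 1) w / cN C (m + 1) ≤ nml C (m + 1) w :=
          div_le_div_of_nonneg_right (le_cWord' hC hμ (m + 1) w) hcN.le
        have hρ1 : t * μ (m + 1) w ≤ rhoC C a₀ (m + 1) w := by
          calc t * μ (m + 1) w
              = (6 / Real.pi ^ 2) / ((m : ℝ) + 1) ^ 2 * (μ (m + 1) w / cN C (m + 1)) := by
                rw [ht]; ring
            _ ≤ (6 / Real.pi ^ 2) / ((m : ℝ) + 1) ^ 2 * nml C (m + 1) w :=
                mul_le_mul_of_nonneg_left h5 (W_pos m).le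
            _ ≤ rhoC C a₀ (m + 1) w := rho_ge hC hCne a₀ m w
        have hρpos : 0 < rhoC C a₀ (m + 1) w := lt_of_lt_of_le (mul_pos htpos h) hρ1
        have hlog2 : Real.log (rhoC C a₀ (m + 1) w / μ (m + 1) w) ≤
            rhoC C a₀ (m + 1) w / μ (m + 1) w - 1 :=
          Real.log_le_sub_one_of_pos (div_pos hρpos h)
        have hneg : Real.log (μ (m + 1) w / rhoC C a₀ (m + 1) w) =
            - Real.log (rhoC C a₀ (m + 1) w / μ (m + 1) w) := by
          rw [← Real.log_inv]; congr 1; rw [inv_div]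
        have hc : μ (m + 1) w * (rhoC C a₀ (m + 1) w / μ (m + 1) w) = rhoC C a₀ (m + 1) w :=
          by field_simp
        rw [hneg, mul_neg]
        nlinarith [mul_le_mul_of_nonneg_left hlog2 h.le]
    calc 1 - S₀ ≤ (∑ w : Fin (m + 1) → X, μ (m + 1) w) -
          ∑ w : Fin (m + 1) → X, rhoC C a₀ (m + 1) w := by
          have := sum_rho_le hC hCne a₀ (m + 1)
          rw [h1 (m + 1)]
          linarith
      _ = ∑ w : Fin (m + 1) → X, (μ (m + 1) w - rhoC C a₀ (m + 1) w) :=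
          (Finset.sum_sub_distrib _ _).symm
      _ ≤ KL μ (rhoC C a₀) (m + 1) := Finset.sum_le_sum (fun w _ => hterm w)
  refine ⟨fun n hn => mul_le_mul_of_nonneg_left (key n hn) (by positivity), ?_⟩
  have hupper : Tendsto (fun n : ℕ => (1 / (n : ℝ)) *
      (Real.log (cN C n) + 2 * Real.log n + Real.log (Real.pi ^ 2 / 6))) atTop (𝓝 0) := by
    have hB : Tendsto (fun n : ℕ => Real.log n / (n : ℝ)) atTop (𝓝 0) := by
      have := (Real.isLittleO_log_id_atTop.tendsto_div_nhds_zero).comp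
        (tendsto_natCast_atTop_atTop (R := ℝ))
      simpa [Function.comp_def] using this
    have hCc : Tendsto (fun n : ℕ => Real.log (Real.pi ^ 2 / 6) / (n : ℝ)) atTop (𝓝 0) :=
      tendsto_const_div_atTop_nhds_zero_nat _
    have hall := (hsub.add (hB.const_mul 2)).add hCc
    rw [show (0:ℝ) + 2 * 0 + 0 = 0 by ring] at hall
    exact hall.congr (fun n => by ring)
  have hlower : Tendsto (fun n : ℕ => (1 - S₀) / (n : ℝ)) atTop (𝓝 0) :=
    tendsto_const_div_atTop_nhds_zero_nat _
  refine tendsto_of_tendsto_of_tendsto_of_le_of_le' hlower hupper ?_ ?_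
  · filter_upwards [eventually_ge_atTop 1] with n hn
    have h2 := hlow n hn
    have h3 : (0:ℝ) ≤ 1 / (n : ℝ) := by positivity
    calc (1 - S₀) / (n : ℝ) = (1 / (n : ℝ)) * (1 - S₀) := by ring
      _ ≤ (1 / (n : ℝ)) * KL μ (rhoC C a₀) n := mul_le_mul_of_nonneg_left h2 h3
  · filter_upwards [eventually_ge_atTop 1] with n hn
    exact mul_le_mul_of_nonneg_left (key n hn) (by positivity)
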